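/- Every solution of the difference equation x_{n+4} = max{x_{n+3}, x_{n+2}, x_{n+1}, 0} - x_n with real initial conditions is bounded; in fact |x_n| ≤ max{|x_j| : 1 ≤ j ≤ 12} for all n ≥ 1. -/
import Mathlib

private lemma rec_ge {p q r s t : ℝ} (h : t = max (max (max p q) r) 0 - s) :
    p - s ≤ t ∧ q - s ≤ t ∧ r - s ≤ t ∧ -s ≤ t := by
  have hp : p ≤ max (max (max p q) r) 0 :=
    le_trans (le_trans (le_max_left p q) (le_max_left _ r)) (le_max_left _ 0)
  have hq : q ≤ max (max (max p q) r) 0 :=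
    le_trans (le_trans (le_max_right p q) (le_max_left _ r)) (le_max_left _ 0)
  have hr : r ≤ max (max (max p q) r) 0 :=
    le_trans (le_max_right _ r) (le_max_left _ 0)
  have h0 : (0:ℝ) ≤ max (max (max p q) r) 0 := le_max_right _ 0
  exact ⟨by linarith, by linarith, by linarith, by linarith⟩

private lemma rec_comp {p q r s t : ℝ} (h : t = max (max (max p q) r) 0 - s) :
    p ≤ t + s ∧ q ≤ t + s ∧ r ≤ t + s ∧ 0 ≤ t + s := by
  obtain ⟨a, b, c, d⟩ := rec_ge h
  exact ⟨by linarith, by linarith, by linarith, by linarith⟩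

private lemma rec_le {p q r s t K : ℝ} (h : t = max (max (max p q) r) 0 - s)
    (h1 : p ≤ K + s) (h2 : q ≤ K + s) (h3 : r ≤ K + s) (h4 : 0 ≤ K + s) : t ≤ K := by
  have : max (max (max p q) r) 0 ≤ K + s :=
    max_le (max_le (max_le h1 h2) h3) h4
  linarith

private lemma window (x : ℕ → ℝ)
    (hrec : ∀ n ≥ 1, x (n + 4) = max (max (max (x (n + 3)) (x (n + 2))) (x (n + 1))) 0 - x n)
    (n : ℕ) (hn : 1 ≤ n) (M : ℝ)
    (hM : ∀ k, k ≤ 10 → |x (n + k)| ≤ M) : |x (n + 11)| ≤ M := by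
  have b0 : -M ≤ x n ∧ x n ≤ M := by simpa using abs_le.mp (hM 0 (by norm_num))
  have b1 := abs_le.mp (hM 1 (by norm_num))
  have b2 := abs_le.mp (hM 2 (by norm_num))
  have b3 := abs_le.mp (hM 3 (by norm_num))
  have b7 := abs_le.mp (hM 7 (by norm_num))
  have b8 := abs_le.mp (hM 8 (by norm_num))
  have b9 := abs_le.mp (hM 9 (by norm_num))
  have b10 := abs_le.mp (hM 10 (by norm_num))
  have hM0 : 0 ≤ M := le_trans (abs_nonneg _) (hM 0 (by norm_num))
  have e4 : x (n+4) = max (max (max (x (n+3)) (x (n+2))) (x (n+1))) 0 - x n :=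
    hrec n hn
  have e5 : x (n+5) = max (max (max (x (n+4)) (x (n+3))) (x (n+2))) 0 - x (n+1) :=
    hrec (n+1) (by omega)
  have e6 : x (n+6) = max (max (max (x (n+5)) (x (n+4))) (x (n+3))) 0 - x (n+2) :=
    hrec (n+2) (by omega)
  have e7 : x (n+7) = max (max (max (x (n+6)) (x (n+5))) (x (n+4))) 0 - x (n+3) :=
    hrec (n+3) (by omega)
  have e8 : x (n+8) = max (max (max (x (n+7)) (x (n+6))) (x (n+5))) 0 - x (n+4) :=
    hrec (n+4) (by omega)
  have e9 : x (n+9) = max (max (max (x (n+8)) (x (n+7))) (x (n+6))) 0 - x (n+5) :=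
    hrec (n+5) (by omega)
  have e10 : x (n+10) = max (max (max (x (n+9)) (x (n+8))) (x (n+7))) 0 - x (n+6) :=
    hrec (n+6) (by omega)
  have e11 : x (n+11) = max (max (max (x (n+10)) (x (n+9))) (x (n+8))) 0 - x (n+7) :=
    hrec (n+7) (by omega)
  rw [abs_le]
  constructor
  · -- lower bound
    obtain ⟨-, -, -, h⟩ := rec_ge e11
    linarith [b7.2]
  · rcases le_or_gt 0 (x (n+7)) with h7 | h7
    · exact rec_le e11 (by linarith [b10.2]) (by linarith [b9.2]) (by linarith [b8.2])
        (by linarith)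
    · obtain ⟨g43, g42, g41, g40⟩ := rec_ge e4
      obtain ⟨g54, g53, g52, g50⟩ := rec_ge e5
      obtain ⟨g65, g64, g63, g60⟩ := rec_ge e6
      obtain ⟨c6, c5, c4, c0⟩ := rec_comp e7
      -- x (n+6) ≤ x (n+3) - x (n+2)
      have u6' : x (n+6) ≤ x (n+3) - x (n+2) :=
        rec_le e6 (by linarith) (by linarith) (by linarith) (by linarith)
      -- x (n+2) ≥ - x (n+7)
      have h2c : -x (n+7) ≤ x (n+2) := by linarith [g63, c6]
      -- x (n+8) ≤ x (n+3) + x (n+7) - x (n+4)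
      have h8b : x (n+8) ≤ x (n+3) + x (n+7) - x (n+4) :=
        rec_le e8 (by linarith) (by linarith) (by linarith) (by linarith)
      have h8M : x (n+8) ≤ M + x (n+7) := by linarith [g43, b0.2]
      have hm5 : -x (n+5) ≤ M + x (n+7) := by linarith [g53, b1.2, c0]
      have h65 : x (n+6) - x (n+5) ≤ M + x (n+7) := by
        linarith [u6', g53, b1.2, h2c]
      have h9M : x (n+9) ≤ M + x (n+7) := by
        refine rec_le e9 ?_ ?_ ?_ ?_
        · linarith [h8b, g41, g53, b0.2]
        · linarith [hm5]
        · linarith [h65]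
        · linarith [g53, b1.2, c0]
      have h10M : x (n+10) ≤ M + x (n+7) := by
        refine rec_le e10 ?_ ?_ ?_ ?_
        · -- x (n+9) ≤ M + x (n+7) + x (n+6)
          refine rec_le e9 ?_ ?_ ?_ ?_
          · linarith [h8b, g41, g52, g63, b0.2]
          · linarith [g52, g63, b1.2, c0]
          · linarith [hm5]
          · linarith [g52, g63, b1.2, c0]
        · linarith [h8b, g42, g63, b0.2]
        · linarith [g63, h2c, b2.2, c0]
        · linarith [g63, h2c, b2.2]
      exact rec_le e11 (by linarith) (by linarith) (by linarith) (by linarith [c0, b3.2])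

theorem stmt_0 (x : ℕ → ℝ)
    (hrec : ∀ n ≥ 1, x (n + 4) = max (max (max (x (n + 3)) (x (n + 2))) (x (n + 1))) 0 - x n) :
    ∀ n ≥ 1, |x n| ≤ (Finset.Icc 1 12).sup' ⟨1, by simp⟩ (fun j => |x j|) := by
  set M := (Finset.Icc 1 12).sup' ⟨1, by simp⟩ (fun j => |x j|) with hMdef
  have hbase : ∀ j, 1 ≤ j → j ≤ 12 → |x j| ≤ M := by
    intro j h1 h2
    exact Finset.le_sup' (fun j => |x j|) (Finset.mem_Icc.mpr ⟨h1, h2⟩)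
  intro n
  induction n using Nat.strong_induction_on with
  | _ n ih =>
    intro hn
    rcases le_or_gt n 12 with h | h
    · exact hbase n hn h
    · obtain ⟨m, rfl⟩ : ∃ m, n = m + 11 := ⟨n - 11, by omega⟩
      exact window x hrec m (by omega) M (fun k hk => ih (m + k) (by omega) (by omega))
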